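/- Let 1 ≤ k < n be integers and set λ := n/(n−k). Then for every s ≥ 1, with μ_ℓ(s) := 2(s−1)^ℓ/(s+1)^{ℓ+1} (convention 0^0 = 1), one has Σ_{ℓ=0}^∞ |μ_ℓ(s) − μ_ℓ(λs)| ≤ (n/k − 1/2)^{-1} = 2k/(2n−k). -/

import Mathlib

set_option maxHeartbeats 1000000


/-- Eigenvalue sequence (in the Fock basis) of the single-mode thermal Gaussian state with
covariance matrix `s·1₂`: `μ_ℓ(s) = 2(s-1)^ℓ/(s+1)^{ℓ+1}` (with `0^0 = 1`). -/
noncomputable def thermalEigenvalue (s : ℝ) (ℓ : ℕ) : ℝ :=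
  2 * (s - 1) ^ ℓ / (s + 1) ^ (ℓ + 1)

private lemma cross_term {p q : ℝ} (hp : 0 ≤ p) (hpq : p ≤ q) (hq : q ≤ 1) (i j : ℕ) :
    q ^ i * p ^ j + q ^ j * p ^ i ≤ (p * q) ^ i + (p * q) ^ j := by
  wlog hij : i ≤ j generalizing i j
  · have := this j i (le_of_not_ge hij); linarith
  obtain ⟨d, rfl⟩ := Nat.exists_eq_add_of_le hij
  have hq0 : 0 ≤ q := le_trans hp hpq
  have h1 : p ^ d ≤ 1 := pow_le_one₀ hp (hpq.trans hq)
  have h2 : q ^ d ≤ 1 := pow_le_one₀ hq0 hq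
  have hpd : 0 ≤ p ^ d := pow_nonneg hp d
  have hqd : 0 ≤ q ^ d := pow_nonneg hq0 d
  have key : p ^ d + q ^ d ≤ 1 + p ^ d * q ^ d := by nlinarith
  have hpqi : (0:ℝ) ≤ (p * q) ^ i := pow_nonneg (mul_nonneg hp hq0) i
  calc q ^ i * p ^ (i + d) + q ^ (i + d) * p ^ i
      = (p * q) ^ i * (p ^ d + q ^ d) := by rw [pow_add, pow_add, mul_pow]; ring
    _ ≤ (p * q) ^ i * (1 + p ^ d * q ^ d) := by nlinarith
    _ = (p * q) ^ i + (p * q) ^ (i + d) := by rw [pow_add, mul_pow]; ring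

private lemma pow_sub_pow_key {p q : ℝ} (hp : 0 ≤ p) (hpq : p ≤ q) (hq : q ≤ 1) (m : ℕ) :
    (q ^ m - p ^ m) * (1 - p * q) ≤ q - p := by
  have hq0 : 0 ≤ q := le_trans hp hpq
  have hpq1 : p * q ≤ 1 := by nlinarith
  set S : ℝ := ∑ i ∈ Finset.range m, q ^ i * p ^ (m - 1 - i) with hS
  have hgeom : S * (q - p) = q ^ m - p ^ m := geom_sum₂_mul q p m
  set G : ℝ := ∑ i ∈ Finset.range m, (p * q) ^ i with hG
  have hSG : S ≤ G := by
    have hrefl : (∑ j ∈ Finset.range m, q ^ (m - 1 - j) * p ^ j) = S := by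
      rw [hS, ← Finset.sum_range_reflect (fun i => q ^ i * p ^ (m - 1 - i)) m]
      refine Finset.sum_congr rfl fun j hj => ?_
      have hj' := Finset.mem_range.mp hj
      have hjj : m - 1 - (m - 1 - j) = j := by omega
      rw [hjj]
    have hGrefl : (∑ j ∈ Finset.range m, (p * q) ^ (m - 1 - j)) = G := by
      rw [hG, ← Finset.sum_range_reflect (fun i => (p * q) ^ i) m]
    have h2 : S + S ≤ G + G := by
      calc S + S = ∑ i ∈ Finset.range m, (q ^ i * p ^ (m - 1 - i) + q ^ (m - 1 - i) * p ^ i) := by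
            rw [Finset.sum_add_distrib, hrefl]
        _ ≤ ∑ i ∈ Finset.range m, ((p * q) ^ i + (p * q) ^ (m - 1 - i)) := by
            refine Finset.sum_le_sum fun i _ => cross_term hp hpq hq i (m - 1 - i)
        _ = G + G := by rw [Finset.sum_add_distrib, hGrefl]
    linarith
  have hGsum : G * (1 - p * q) = 1 - (p * q) ^ m := by
    have h := geom_sum_mul (p * q) m
    rw [← hG] at h
    linarith [h]
  have hGpos : (q - p) * (1 - p * q) ≥ 0 := mul_nonneg (by linarith) (by linarith)
  have hpqm : 0 ≤ (p * q) ^ m := pow_nonneg (mul_nonneg hp hq0) m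
  calc (q ^ m - p ^ m) * (1 - p * q) = S * ((q - p) * (1 - p * q)) := by rw [← hgeom]; ring
    _ ≤ G * ((q - p) * (1 - p * q)) := mul_le_mul_of_nonneg_right hSG hGpos
    _ = (1 - (p * q) ^ m) * (q - p) := by linear_combination (q - p) * hGsum
    _ ≤ q - p := by nlinarith

/-- **quantitative core of the single-mode Gaussian de Finetti theorem.**
For `1 ≤ k < n` and `λ = n/(n-k)`, the trace-norm distance between the thermal states with
covariance matrices `s·1₂` and `λs·1₂` is at most `(n/k - 1/2)⁻¹ = 2k/(2n-k)`. -/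
theorem single_mode_de_finetti_bound (k n : ℕ) (hk : 1 ≤ k) (hkn : k < n)
    (lam : ℝ) (hlam : lam = (n : ℝ) / ((n : ℝ) - k)) (s : ℝ) (hs : 1 ≤ s) :
    (∑' ℓ : ℕ, |thermalEigenvalue s ℓ - thermalEigenvalue (lam * s) ℓ|
        ≤ ((n : ℝ) / k - 1 / 2)⁻¹)
    ∧ ((n : ℝ) / k - 1 / 2)⁻¹ = 2 * k / (2 * n - k) := by
  have hk' : (1:ℝ) ≤ (k:ℝ) := by exact_mod_cast hk
  have hkn' : (k:ℝ) < (n:ℝ) := by exact_mod_cast hkn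
  have hK : (0:ℝ) < k := by linarith
  have hNK : (0:ℝ) < (n:ℝ) - k := by linarith
  have h2nk : (0:ℝ) < 2 * n - k := by linarith
  have hEq : ((n : ℝ) / k - 1 / 2)⁻¹ = 2 * k / (2 * n - k) := by
    rw [show (n:ℝ)/k - 1/2 = (2*n - k)/(2*k) by field_simp, inv_div]
  refine ⟨?_, hEq⟩
  -- basic positivity facts
  have hlam1 : 1 < lam := by
    rw [hlam, lt_div_iff₀ hNK]; linarith
  have hs0 : (0:ℝ) < s := by linarith
  have hs1 : (0:ℝ) < s + 1 := by linarith
  have hls : 1 < lam * s := by nlinarith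
  have hls1 : (0:ℝ) < lam * s + 1 := by linarith
  set p : ℝ := (s - 1)/(s + 1) with hpdef
  set q : ℝ := (lam * s - 1)/(lam * s + 1) with hqdef
  have hp0 : 0 ≤ p := div_nonneg (by linarith) (by linarith)
  have hp1 : p < 1 := (div_lt_one hs1).2 (by linarith)
  have hq0 : 0 < q := div_pos (by linarith) hls1
  have hq1 : q < 1 := (div_lt_one hls1).2 (by linarith)
  have hpq : p < q := by
    rw [hpdef, hqdef, div_lt_div_iff₀ hs1 hls1]; nlinarith
  -- rewrite the eigenvalues as geometric distributions
  have hTE : ∀ (t : ℝ), 0 < t + 1 → ∀ ℓ : ℕ,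
      thermalEigenvalue t ℓ = (1 - (t - 1)/(t + 1)) * ((t - 1)/(t + 1)) ^ ℓ := by
    intro t ht ℓ
    have ht' : (t + 1) ≠ 0 := ne_of_gt ht
    have hpow : ((t:ℝ) + 1) ^ ℓ ≠ 0 := pow_ne_zero _ ht'
    unfold thermalEigenvalue
    rw [div_pow]
    field_simp
    ring
  have hbody : ∀ ℓ : ℕ, |thermalEigenvalue s ℓ - thermalEigenvalue (lam * s) ℓ|
      = |(1 - p) * p ^ ℓ - (1 - q) * q ^ ℓ| := by
    intro ℓ
    rw [hTE s hs1 ℓ, hTE (lam * s) hls1 ℓ]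
  -- summability
  have hsa : Summable (fun ℓ : ℕ => (1 - p) * p ^ ℓ) :=
    (summable_geometric_of_lt_one hp0 hp1).mul_left _
  have hsb : Summable (fun ℓ : ℕ => (1 - q) * q ^ ℓ) :=
    (summable_geometric_of_lt_one hq0.le hq1).mul_left _
  set F : ℕ → ℝ := fun ℓ => |(1 - p) * p ^ ℓ - (1 - q) * q ^ ℓ| with hFdef
  have hF : Summable F := by
    refine Summable.of_nonneg_of_le (fun ℓ => abs_nonneg _) (fun ℓ => ?_) (hsa.add hsb)
    calc |(1 - p) * p ^ ℓ - (1 - q) * q ^ ℓ| ≤ |(1 - p) * p ^ ℓ| + |(1 - q) * q ^ ℓ| :=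
          abs_sub _ _
      _ = (1 - p) * p ^ ℓ + (1 - q) * q ^ ℓ := by
          rw [abs_of_nonneg, abs_of_nonneg]
          · exact mul_nonneg (by linarith) (pow_nonneg hq0.le ℓ)
          · exact mul_nonneg (by linarith) (pow_nonneg hp0 ℓ)
  -- the crossing point
  have hex : ∃ ℓ : ℕ, (1 - p) * p ^ ℓ < (1 - q) * q ^ ℓ := by
    obtain ⟨ℓ, hℓ⟩ := exists_pow_lt_of_lt_one
      (show (0:ℝ) < (1 - q)/(1 - p) from div_pos (by linarith) (by linarith))
      (show p / q < 1 from (div_lt_one hq0).2 hpq)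
    refine ⟨ℓ, ?_⟩
    rw [div_pow, div_lt_div_iff₀ (pow_pos hq0 ℓ) (show (0:ℝ) < 1 - p by linarith)] at hℓ
    calc (1 - p) * p ^ ℓ = p ^ ℓ * (1 - p) := mul_comm _ _
      _ < (1 - q) * q ^ ℓ := hℓ
  set m : ℕ := Nat.find hex with hmdef
  have hm : (1 - p) * p ^ m < (1 - q) * q ^ m := Nat.find_spec hex
  have hbefore : ∀ ℓ < m, (1 - q) * q ^ ℓ ≤ (1 - p) * p ^ ℓ := by
    intro ℓ hℓ
    exact le_of_not_gt (Nat.find_min hex hℓ)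
  have hafter : ∀ i : ℕ, (1 - p) * p ^ (i + m) ≤ (1 - q) * q ^ (i + m) := by
    intro i
    have h1 : (1 - p) * p ^ (i + m) = ((1 - p) * p ^ m) * p ^ i := by rw [pow_add]; ring
    have h2 : (1 - q) * q ^ (i + m) = ((1 - q) * q ^ m) * q ^ i := by rw [pow_add]; ring
    rw [h1, h2]
    have hpi : p ^ i ≤ q ^ i := pow_le_pow_left₀ hp0 hpq.le i
    have hql : 0 ≤ (1 - p) * p ^ m := mul_nonneg (by linarith) (pow_nonneg hp0 m)
    exact mul_le_mul hm.le hpi (pow_nonneg hp0 i) (mul_nonneg (by linarith) (pow_nonneg hq0.le m))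
  -- finite geometric sums
  have hfin : ∀ r : ℝ, r ≠ 1 → (∑ ℓ ∈ Finset.range m, (1 - r) * r ^ ℓ) = 1 - r ^ m := by
    intro r hr
    have h := geom_sum_mul r m
    rw [← Finset.mul_sum]
    nlinarith [h]
  -- tails
  have htail : ∀ r : ℝ, 0 ≤ r → r < 1 → (∑' i : ℕ, (1 - r) * r ^ (i + m)) = r ^ m := by
    intro r h0 h1
    have hfun : (fun i : ℕ => (1 - r) * r ^ (i + m)) = fun i : ℕ => ((1 - r) * r ^ m) * r ^ i := by
      funext i; rw [pow_add]; ring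
    rw [hfun, tsum_mul_left, tsum_geometric_of_lt_one h0 h1]
    have h1r : (1 - r) ≠ 0 := by intro h; rw [sub_eq_zero] at h; exact absurd h.symm (ne_of_lt h1)
    field_simp
  have htails : Summable (fun i : ℕ => (1 - q) * q ^ (i + m)) := by
    have hfun : (fun i : ℕ => (1 - q) * q ^ (i + m)) = fun i : ℕ => ((1 - q) * q ^ m) * q ^ i := by
      funext i; rw [pow_add]; ring
    rw [hfun]
    exact (summable_geometric_of_lt_one hq0.le hq1).mul_left _
  have htailsa : Summable (fun i : ℕ => (1 - p) * p ^ (i + m)) := by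
    have hfun : (fun i : ℕ => (1 - p) * p ^ (i + m)) = fun i : ℕ => ((1 - p) * p ^ m) * p ^ i := by
      funext i; rw [pow_add]; ring
    rw [hfun]
    exact (summable_geometric_of_lt_one hp0 hp1).mul_left _
  -- compute the total sum
  have hsplit : (∑ i ∈ Finset.range m, F i) + (∑' i : ℕ, F (i + m)) = ∑' i : ℕ, F i :=
    Summable.sum_add_tsum_nat_add m hF
  have hhead : (∑ i ∈ Finset.range m, F i) = q ^ m - p ^ m := by
    have : (∑ i ∈ Finset.range m, F i)
        = ∑ i ∈ Finset.range m, ((1 - p) * p ^ i - (1 - q) * q ^ i) := by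
      refine Finset.sum_congr rfl fun i hi => ?_
      have hi' := Finset.mem_range.mp hi
      simp only [hFdef]
      exact abs_of_nonneg (by linarith [hbefore i hi'])
    rw [this, Finset.sum_sub_distrib, hfin p (ne_of_lt hp1), hfin q (ne_of_lt hq1)]
    ring
  have htailF : (∑' i : ℕ, F (i + m)) = q ^ m - p ^ m := by
    have : (fun i : ℕ => F (i + m))
        = fun i : ℕ => ((1 - q) * q ^ (i + m) - (1 - p) * p ^ (i + m)) := by
      funext i
      simp only [hFdef]
      rw [abs_sub_comm]
      exact abs_of_nonneg (by linarith [hafter i])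
    rw [this, Summable.tsum_sub htails htailsa, htail q hq0.le hq1, htail p hp0 hp1]
  have htotal : (∑' ℓ : ℕ, |thermalEigenvalue s ℓ - thermalEigenvalue (lam * s) ℓ|)
      = 2 * (q ^ m - p ^ m) := by
    have : (∑' ℓ : ℕ, |thermalEigenvalue s ℓ - thermalEigenvalue (lam * s) ℓ|)
        = ∑' ℓ : ℕ, F ℓ := tsum_congr hbody
    rw [this, ← hsplit, hhead, htailF]
    ring
  -- final bound
  have hkey := pow_sub_pow_key hp0 hpq.le hq1.le m
  have h1pq : 0 < 1 - p * q := by nlinarith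
  have hiden : (q - p) * (lam + 1) = (1 - p * q) * (lam - 1) := by
    have h1 : (s + 1) ≠ 0 := ne_of_gt hs1
    have h2 : (lam * s + 1) ≠ 0 := ne_of_gt hls1
    rw [hpdef, hqdef]
    field_simp
    ring
  have hl1 : (0:ℝ) < lam + 1 := by linarith
  have hbound : q ^ m - p ^ m ≤ (lam - 1)/(lam + 1) := by
    rw [le_div_iff₀ hl1]
    nlinarith [mul_le_mul_of_nonneg_right hkey hl1.le]
  have hT : 2 * ((lam - 1)/(lam + 1)) = ((n : ℝ) / k - 1 / 2)⁻¹ := by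
    rw [hEq, hlam]
    have hnk0 : ((n:ℝ) - k) ≠ 0 := ne_of_gt hNK
    have hden : ((n:ℝ)/((n:ℝ) - k) + 1) ≠ 0 := by
      rw [div_add' _ _ _ hnk0]
      exact div_ne_zero (by linarith) hnk0
    field_simp
    ring
  rw [htotal, ← hT]
  linarith [hbound]
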